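/- Let p, q ∈ [1,∞] with 1/p + 1/q = 1, let F ⊆ [0,1]ⁿ be a convex set, η > 0, α ≥ 1, and let R : ℝⁿ → ℝ be β-strongly convex with respect to the ℓ_p norm on F for some β > 0. Let x₀ = 0 and x₁,…,x_T ∈ [0,1]ⁿ, and for t = 1,…,T let f_t ∈ F minimize f ↦ ⟨f, Σ_{s=1}^{t-1} x_s + α x_{t-1}⟩ + R(f)/η over F, and let h_t ∈ F minimize f ↦ ⟨f, Σ_{s=1}^{t-1} x_s + α x_t⟩ + R(f)/η over F. Then for every t, ‖h_t − f_t‖_p ≤ (ηα/β) ‖x_t − x_{t-1}‖_q. -/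

import Mathlib

open scoped BigOperators ENNReal

noncomputable section

/-- The bilinear pairing `⟨a, b⟩ = ∑ i, a i * b i` on `ℝⁿ`. -/
def ip {n : ℕ} (a b : Fin n → ℝ) : ℝ := ∑ i, a i * b i

/-- The `ℓ_p` norm on `ℝⁿ`, for `p ∈ [1, ∞]` (`‖a‖_∞ = max_i |a i|`). -/
def lpNorm {n : ℕ} (p : ℝ≥0∞) (a : Fin n → ℝ) : ℝ :=
  if p = ⊤ then ⨆ i, |a i| else (∑ i, |a i| ^ p.toReal) ^ (1 / p.toReal)

/-- `R` is `β`-strongly convex with respect to the `ℓ_p` norm on the convex set `F`. -/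
def StronglyConvexOnWrt {n : ℕ} (F : Set (Fin n → ℝ)) (β : ℝ) (p : ℝ≥0∞)
    (R : (Fin n → ℝ) → ℝ) : Prop :=
  ∀ a ∈ F, ∀ b ∈ F, ∀ l : ℝ, 0 ≤ l → l ≤ 1 →
    R (l • a + (1 - l) • b) ≤
      l * R a + (1 - l) * R b - β / 2 * l * (1 - l) * (lpNorm p (a - b)) ^ 2

lemma lpNorm_nonneg {n : ℕ} (p : ℝ≥0∞) (a : Fin n → ℝ) : 0 ≤ lpNorm p a := by
  unfold lpNorm
  split
  · exact Real.iSup_nonneg fun i => abs_nonneg _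
  · exact Real.rpow_nonneg
      (Finset.sum_nonneg fun i _ => Real.rpow_nonneg (abs_nonneg _) _) _

lemma lpNorm_neg {n : ℕ} (p : ℝ≥0∞) (a : Fin n → ℝ) : lpNorm p (-a) = lpNorm p a := by
  unfold lpNorm
  simp

lemma ip_holder {n : ℕ} (p q : ℝ≥0∞) (hp : 1 ≤ p) (hq : 1 ≤ q)
    (hpq : 1 / p + 1 / q = 1) (a b : Fin n → ℝ) :
    ip a b ≤ lpNorm p a * lpNorm q b := by
  simp only [one_div] at hpq
  rcases eq_or_ne p ⊤ with hpt | hpt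
  · have hq1 : q = 1 := by
      rw [hpt] at hpq
      simp only [ENNReal.inv_top, zero_add, ENNReal.inv_eq_one] at hpq
      exact hpq
    subst hq1; subst hpt
    have hb : lpNorm (1 : ℝ≥0∞) b = ∑ i, |b i| := by
      simp [lpNorm, Real.rpow_one]
    have hbdd : BddAbove (Set.range fun j => |a j|) :=
      Set.Finite.bddAbove (Set.finite_range _)
    calc ip a b = ∑ i, a i * b i := rfl
      _ ≤ ∑ i, (⨆ j, |a j|) * |b i| := by
          refine Finset.sum_le_sum fun i _ => ?_
          calc a i * b i ≤ |a i * b i| := le_abs_self _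
            _ = |a i| * |b i| := abs_mul _ _
            _ ≤ (⨆ j, |a j|) * |b i| :=
              mul_le_mul_of_nonneg_right (le_ciSup hbdd i) (abs_nonneg _)
      _ = (⨆ j, |a j|) * ∑ i, |b i| := by rw [← Finset.mul_sum]
      _ = lpNorm ⊤ a * lpNorm 1 b := by rw [hb]; simp [lpNorm]
  · rcases eq_or_ne q ⊤ with hqt | hqt
    · have hp1 : p = 1 := by
        rw [hqt] at hpq
        simp only [ENNReal.inv_top, add_zero, ENNReal.inv_eq_one] at hpq
        exact hpq
      subst hp1; subst hqt
      have ha : lpNorm (1 : ℝ≥0∞) a = ∑ i, |a i| := by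
        simp [lpNorm, Real.rpow_one]
      have hbdd : BddAbove (Set.range fun j => |b j|) :=
        Set.Finite.bddAbove (Set.finite_range _)
      calc ip a b = ∑ i, a i * b i := rfl
        _ ≤ ∑ i, |a i| * (⨆ j, |b j|) := by
            refine Finset.sum_le_sum fun i _ => ?_
            calc a i * b i ≤ |a i * b i| := le_abs_self _
              _ = |a i| * |b i| := abs_mul _ _
              _ ≤ |a i| * (⨆ j, |b j|) :=
                mul_le_mul_of_nonneg_left (le_ciSup hbdd i) (abs_nonneg _)
        _ = (∑ i, |a i|) * (⨆ j, |b j|) := by rw [← Finset.sum_mul]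
        _ = lpNorm 1 a * lpNorm ⊤ b := by rw [ha]; simp [lpNorm]
    · -- both finite
      have hp0 : p ≠ 0 := (lt_of_lt_of_le zero_lt_one hp).ne'
      have hq0 : q ≠ 0 := (lt_of_lt_of_le zero_lt_one hq).ne'
      have hpinv : p⁻¹ ≠ ⊤ := by simp [hp0]
      have hqinv : q⁻¹ ≠ ⊤ := by simp [hq0]
      have htr : p.toReal⁻¹ + q.toReal⁻¹ = 1 := by
        have := congrArg ENNReal.toReal hpq
        rwa [ENNReal.toReal_add hpinv hqinv, ENNReal.toReal_inv, ENNReal.toReal_inv,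
          ENNReal.toReal_one] at this
      have hppos : 0 < p.toReal := ENNReal.toReal_pos hp0 hpt
      have hqpos : 0 < q.toReal := ENNReal.toReal_pos hq0 hqt
      have hplt : 1 < p.toReal := by
        have h1 : q.toReal⁻¹ > 0 := inv_pos.mpr hqpos
        have h2 : p.toReal⁻¹ < 1 := by linarith
        have h3 := mul_inv_cancel₀ hppos.ne'
        nlinarith
      have hconj : Real.HolderConjugate p.toReal q.toReal := Real.holderConjugate_iff.mpr ⟨hplt, htr⟩
      have key := Real.inner_le_Lp_mul_Lq Finset.univ a b hconj
      calc ip a b = ∑ i, a i * b i := rfl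
        _ ≤ (∑ i, |a i| ^ p.toReal) ^ (1 / p.toReal) *
              (∑ i, |b i| ^ q.toReal) ^ (1 / q.toReal) := key
        _ = lpNorm p a * lpNorm q b := by rw [lpNorm, lpNorm, if_neg hpt, if_neg hqt]

lemma ip_affine {n : ℕ} (l : ℝ) (g m z : Fin n → ℝ) :
    ip (l • g + (1 - l) • m) z = l * ip g z + (1 - l) * ip m z := by
  simp only [ip, Pi.add_apply, Pi.smul_apply, smul_eq_mul, add_mul,
    Finset.sum_add_distrib, Finset.mul_sum, mul_assoc]

lemma ip_sub_left {n : ℕ} (a b c : Fin n → ℝ) : ip (a - b) c = ip a c - ip b c := by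
  simp only [ip, Pi.sub_apply, sub_mul, Finset.sum_sub_distrib]

lemma ip_sub_right {n : ℕ} (a b c : Fin n → ℝ) : ip a (b - c) = ip a b - ip a c := by
  simp only [ip, Pi.sub_apply, mul_sub, Finset.sum_sub_distrib]

lemma ip_smul_right {n : ℕ} (r : ℝ) (a b : Fin n → ℝ) : ip a (r • b) = r * ip a b := by
  simp only [ip, Pi.smul_apply, smul_eq_mul, Finset.mul_sum, mul_left_comm]

/-- Key strong-convexity estimate for a constrained minimizer. -/
lemma strong_min {n : ℕ} {F : Set (Fin n → ℝ)} (hFconv : Convex ℝ F) {β η : ℝ}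
    (hβ : 0 < β) (hη : 0 < η) {p : ℝ≥0∞} {R : (Fin n → ℝ) → ℝ}
    (hR : StronglyConvexOnWrt F β p R) (z : Fin n → ℝ) {m g : Fin n → ℝ}
    (hm : m ∈ F) (hg : g ∈ F)
    (hmin : ∀ f' ∈ F, ip m z + R m / η ≤ ip f' z + R f' / η) :
    η * ip m z + R m + β / 2 * (lpNorm p (g - m)) ^ 2 ≤ η * ip g z + R g := by
  set D := lpNorm p (g - m) with hD
  have hkey : ∀ l : ℝ, 0 < l → l ≤ 1 →
      η * ip m z + R m + β / 2 * (1 - l) * D ^ 2 ≤ η * ip g z + R g := by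
    intro l hl0 hl1
    have hcF : l • g + (1 - l) • m ∈ F := hFconv hg hm hl0.le (by linarith) (by ring)
    have H1 : ip m z + R m / η ≤
        ip (l • g + (1 - l) • m) z + R (l • g + (1 - l) • m) / η := hmin _ hcF
    have hic := ip_affine l g m z
    have hRc : R (l • g + (1 - l) • m) ≤
        l * R g + (1 - l) * R m - β / 2 * l * (1 - l) * D ^ 2 :=
      hR g hg m hm l hl0.le hl1
    have H1' : η * ip m z + R m ≤
        η * ip (l • g + (1 - l) • m) z + R (l • g + (1 - l) • m) := by
      have h2 := mul_le_mul_of_nonneg_left H1 hη.le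
      have e1 : η * (ip m z + R m / η) = η * ip m z + R m := by field_simp
      have e2 : η * (ip (l • g + (1 - l) • m) z + R (l • g + (1 - l) • m) / η) =
          η * ip (l • g + (1 - l) • m) z + R (l • g + (1 - l) • m) := by field_simp
      rw [e1, e2] at h2
      exact h2
    rw [hic] at H1'
    have H2 : l * (η * ip m z + R m) + β / 2 * l * (1 - l) * D ^ 2 ≤
        l * (η * ip g z + R g) := by nlinarith [H1', hRc]
    nlinarith [H2, hl0]
  refine le_of_forall_pos_le_add fun ε hε => ?_
  set c := β / 2 * D ^ 2 with hc
  have hc0 : 0 ≤ c := by positivity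
  set l := min 1 (ε / (c + 1)) with hl
  have hl0 : 0 < l := lt_min one_pos (div_pos hε (by linarith))
  have hl1 : l ≤ 1 := min_le_left _ _
  have h := hkey l hl0 hl1
  have hcl : c * l ≤ ε := by
    calc c * l ≤ c * (ε / (c + 1)) :=
          mul_le_mul_of_nonneg_left (min_le_right _ _) hc0
      _ ≤ (c + 1) * (ε / (c + 1)) := by
          have : 0 ≤ ε / (c + 1) := le_of_lt (div_pos hε (by linarith))
          nlinarith
      _ = ε := by rw [mul_comm, div_mul_cancel₀ _ (by linarith : c + 1 ≠ 0)]
  nlinarith [h, hcl]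

/-- **Stability of AFTRL against its one-step-lookahead iterate:**
`‖h t - f t‖_p ≤ (η α / β) ‖x t - x (t-1)‖_q`. -/
theorem aftrl_lookahead_close {n T : ℕ} (p q : ℝ≥0∞)
    (hp : 1 ≤ p) (hq : 1 ≤ q) (hpq : 1 / p + 1 / q = 1)
    (F : Set (Fin n → ℝ)) (hFsub : F ⊆ Set.Icc 0 1) (hFconv : Convex ℝ F)
    (η : ℝ) (hη : 0 < η) (α : ℝ) (hα : 1 ≤ α) (β : ℝ) (hβ : 0 < β)
    (R : (Fin n → ℝ) → ℝ) (hR : StronglyConvexOnWrt F β p R)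
    (x : ℕ → (Fin n → ℝ)) (hx0 : x 0 = 0)
    (hx : ∀ t ∈ Finset.Icc 1 T, x t ∈ Set.Icc (0 : Fin n → ℝ) 1)
    (f h : ℕ → (Fin n → ℝ))
    (hf : ∀ t ∈ Finset.Icc 1 T, f t ∈ F ∧
      ∀ f' ∈ F,
        ip (f t) ((∑ s ∈ Finset.Icc 1 (t - 1), x s) + α • x (t - 1)) + R (f t) / η ≤
        ip f' ((∑ s ∈ Finset.Icc 1 (t - 1), x s) + α • x (t - 1)) + R f' / η)
    (hh : ∀ t ∈ Finset.Icc 1 T, h t ∈ F ∧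
      ∀ f' ∈ F,
        ip (h t) ((∑ s ∈ Finset.Icc 1 (t - 1), x s) + α • x t) + R (h t) / η ≤
        ip f' ((∑ s ∈ Finset.Icc 1 (t - 1), x s) + α • x t) + R f' / η) :
    ∀ t ∈ Finset.Icc 1 T,
      lpNorm p (h t - f t) ≤ η * α / β * lpNorm q (x t - x (t - 1)) := by
  intro t ht
  obtain ⟨hfF, hfmin⟩ := hf t ht
  obtain ⟨hhF, hhmin⟩ := hh t ht
  set z₁ := (∑ s ∈ Finset.Icc 1 (t - 1), x s) + α • x (t - 1) with hz₁
  set z₂ := (∑ s ∈ Finset.Icc 1 (t - 1), x s) + α • x t with hz₂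
  set D := lpNorm p (h t - f t) with hDdef
  set N := lpNorm q (x t - x (t - 1)) with hNdef
  have hD0 : 0 ≤ D := lpNorm_nonneg _ _
  have hN0 : 0 ≤ N := lpNorm_nonneg _ _
  have hα0 : 0 < α := lt_of_lt_of_le zero_lt_one hα
  have h1 := strong_min hFconv hβ hη hR z₁ hfF hhF hfmin
  have h2 := strong_min hFconv hβ hη hR z₂ hhF hfF hhmin
  have hsym : lpNorm p (f t - h t) = D := by
    rw [show f t - h t = -(h t - f t) by abel, lpNorm_neg]
  rw [hsym] at h2
  -- sum the two inequalities
  have h3 : β * D ^ 2 ≤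
      η * (ip (h t) z₁ - ip (f t) z₁ + (ip (f t) z₂ - ip (h t) z₂)) := by
    nlinarith [h1, h2]
  have hzsub : z₁ - z₂ = α • (x (t - 1) - x t) := by
    rw [hz₁, hz₂, smul_sub]
    abel
  have h4 : ip (h t) z₁ - ip (f t) z₁ + (ip (f t) z₂ - ip (h t) z₂) =
      α * ip (h t - f t) (x (t - 1) - x t) := by
    rw [← ip_smul_right, ← hzsub, ip_sub_right, ip_sub_left, ip_sub_left]
    ring
  have hNsym : lpNorm q (x (t - 1) - x t) = N := by
    rw [show x (t - 1) - x t = -(x t - x (t - 1)) by abel, lpNorm_neg]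
  have h5 : ip (h t - f t) (x (t - 1) - x t) ≤ D * N := by
    calc ip (h t - f t) (x (t - 1) - x t)
        ≤ lpNorm p (h t - f t) * lpNorm q (x (t - 1) - x t) :=
          ip_holder p q hp hq hpq _ _
      _ = D * N := by rw [hNsym]
  have h6 : β * D ^ 2 ≤ η * α * (D * N) := by
    calc β * D ^ 2 ≤ η * (α * ip (h t - f t) (x (t - 1) - x t)) := by rw [← h4]; exact h3
      _ ≤ η * (α * (D * N)) := by
          apply mul_le_mul_of_nonneg_left _ hη.le
          exact mul_le_mul_of_nonneg_left h5 hα0.le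
      _ = η * α * (D * N) := by ring
  rcases eq_or_lt_of_le hD0 with hD | hD
  · rw [← hD]
    positivity
  · rw [div_mul_eq_mul_div, le_div_iff₀ hβ]
    nlinarith [h6, hD]
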